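/- Let φ be a finite set of clauses over U ⊕ E, let A be a set of arbiter variables with arbiter clauses φ_A, let τ be a partial assignment of arbiter variables in A, and let ρ : U → Bool be a total universal assignment. If the CNF φ ∪ φ_A ∪ τ ∪ ρ (with τ and ρ viewed as unit clauses over U ⊕ E ⊕ arbiter variables) is unsatisfiable, then there is a subset S of the literals of τ^ρ such that the clause of negations of the literals of S (a subclause of ¬τ^ρ, hence of ¬τ) is derivable by resolution from the expansion φ^ρ. -/

import Mathlib

set_option maxHeartbeats 1000000


/-- Arbiter variables: pairs `(e, σ)` of an existential variable `e` and an
assignment `σ` of its dependency set `D e`. -/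
abbrev ArbVar (U E : Type*) (D : E → Set U) := Σ e : E, (↥(D e) → Bool)

/-- The combined variable type: universal, existential, and arbiter variables. -/
abbrev CVar (U E : Type*) (D : E → Set U) := U ⊕ E ⊕ ArbVar U E D

/-- An assignment `μ` satisfies a clause (a set of literals, each a pair of a
variable and a polarity) if it satisfies one of its literals. -/
def SatClause {V : Type*} (μ : V → Bool) (C : Set (V × Bool)) : Prop :=
  ∃ l ∈ C, μ l.1 = l.2

/-- An assignment `μ` satisfies a CNF (a set of clauses) if it satisfies every clause. -/
def SatCNF {V : Type*} (μ : V → Bool) (Φ : Set (Set (V × Bool))) : Prop :=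
  ∀ C ∈ Φ, SatClause μ C

/-- Derivability of a clause from a CNF by propositional resolution. -/
inductive ResDeriv {V : Type*} (Φ : Set (Set (V × Bool))) : Set (V × Bool) → Prop
  | ax {C : Set (V × Bool)} : C ∈ Φ → ResDeriv Φ C
  | res {C₁ C₂ : Set (V × Bool)} (v : V) :
      ResDeriv Φ (C₁ ∪ {(v, true)}) → ResDeriv Φ (C₂ ∪ {(v, false)}) →
      ResDeriv Φ (C₁ ∪ C₂)

/-- The clause `{((e,σ), true)} ∪ {(u, ¬σ(u)) : u ∈ D e} ∪ {(e, false)}`. -/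
def arbClausePos {U E : Type*} (D : E → Set U) (a : ArbVar U E D) :
    Set (CVar U E D × Bool) :=
  {(Sum.inr (Sum.inr a), true), (Sum.inr (Sum.inl a.1), false)} ∪
    {l | ∃ u : ↥(D a.1), l = (Sum.inl u.1, ! a.2 u)}

/-- The clause `{((e,σ), false)} ∪ {(u, ¬σ(u)) : u ∈ D e} ∪ {(e, true)}`. -/
def arbClauseNeg {U E : Type*} (D : E → Set U) (a : ArbVar U E D) :
    Set (CVar U E D × Bool) :=
  {(Sum.inr (Sum.inr a), false), (Sum.inr (Sum.inl a.1), true)} ∪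
    {l | ∃ u : ↥(D a.1), l = (Sum.inl u.1, ! a.2 u)}

/-- The arbiter clauses for a set `A` of arbiter variables. -/
def arbiterClauses {U E : Type*} (D : E → Set U) (A : Set (ArbVar U E D)) :
    Set (Set (CVar U E D × Bool)) :=
  arbClausePos D '' A ∪ arbClauseNeg D '' A

/-- Restriction of a total universal assignment `ρ` to the dependency set of `e`. -/
def restrict {U E : Type*} (D : E → Set U) (ρ : U → Bool) (e : E) : ↥(D e) → Bool :=
  fun u => ρ u.1

/-- A clause over `U ⊕ E`, viewed as a clause over the combined variable type. -/
def embClause {U E : Type*} (D : E → Set U) (C : Set ((U ⊕ E) × Bool)) :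
    Set (CVar U E D × Bool) :=
  (fun l => (Sum.map id Sum.inl l.1, l.2)) '' C

/-- A CNF over `U ⊕ E`, viewed as a CNF over the combined variable type. -/
def embCNF {U E : Type*} (D : E → Set U) (φ : Set (Set ((U ⊕ E) × Bool))) :
    Set (Set (CVar U E D × Bool)) :=
  embClause D '' φ

/-- The expansion `φ^ρ` of a CNF `φ` over `U ⊕ E` by a total universal assignment `ρ`:
for each clause of `φ` whose universal literals are all falsified by `ρ`, it contains
the clause obtained by replacing each existential literal on `e` by the literal of the
same polarity on the arbiter variable `(e, ρ|_{D e})`. -/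
def expansion {U E : Type*} (D : E → Set U) (φ : Set (Set ((U ⊕ E) × Bool)))
    (ρ : U → Bool) : Set (Set (ArbVar U E D × Bool)) :=
  {C' | ∃ C ∈ φ, (∀ (u : U) (b : Bool), (Sum.inl u, b) ∈ C → ρ u = !b) ∧
    C' = {p : ArbVar U E D × Bool |
            ∃ e : E, (Sum.inr e, p.2) ∈ C ∧ p.1 = ⟨e, restrict D ρ e⟩}}

section ResLemmas
variable {V : Type*}

lemma tree_lemma {Φ : Set (Set (V × Bool))} :
    ∀ (vs : List V) (μ : V → Bool),
      (∀ ν : V → Bool, (∀ v, v ∉ vs → ν v = μ v) → ¬ SatCNF ν Φ) →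
      ∃ C, ResDeriv Φ C ∧ ∀ l ∈ C, l.1 ∉ vs ∧ μ l.1 = !l.2 := by
  classical
  intro vs
  induction vs with
  | nil =>
    intro μ h
    have hμ := h μ (fun _ _ => rfl)
    simp only [SatCNF, not_forall] at hμ
    obtain ⟨C, hC, hsat⟩ := hμ
    refine ⟨C, ResDeriv.ax hC, fun l hl => ⟨by simp, ?_⟩⟩
    by_contra h'
    exact hsat ⟨l, hl, by revert h'; cases l.2 <;> cases hb : μ l.1 <;> simp_all⟩
  | cons v vs ih =>
    intro μ h
    obtain ⟨Ct, hCt, hlt⟩ := ih (Function.update μ v true) (fun ν hν => h ν (by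
      intro w hw
      rw [hν w (fun hh => hw (List.mem_cons_of_mem _ hh))]
      exact Function.update_of_ne (fun hh => hw (by rw [hh]; exact List.mem_cons_self ..)) _ _))
    obtain ⟨Cf, hCf, hlf⟩ := ih (Function.update μ v false) (fun ν hν => h ν (by
      intro w hw
      rw [hν w (fun hh => hw (List.mem_cons_of_mem _ hh))]
      exact Function.update_of_ne (fun hh => hw (by rw [hh]; exact List.mem_cons_self ..)) _ _))
    have keyT : ∀ l ∈ Ct, l.1 = v → l = (v, false) := by
      rintro ⟨w, b⟩ hl rfl
      have := (hlt _ hl).2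
      simp only [Function.update_self] at this
      cases b
      · rfl
      · simp at this
    have keyF : ∀ l ∈ Cf, l.1 = v → l = (v, true) := by
      rintro ⟨w, b⟩ hl rfl
      have := (hlf _ hl).2
      simp only [Function.update_self] at this
      cases b
      · simp at this
      · rfl
    by_cases hvt : (v, false) ∈ Ct
    · by_cases hvf : (v, true) ∈ Cf
      · -- resolve
        have e1 : Cf = (Cf \ {(v, true)}) ∪ {(v, true)} := by
          rw [Set.diff_union_of_subset (by simpa using hvf)]
        have e2 : Ct = (Ct \ {(v, false)}) ∪ {(v, false)} := by
          rw [Set.diff_union_of_subset (by simpa using hvt)]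
        have hres : ResDeriv Φ ((Cf \ {(v, true)}) ∪ (Ct \ {(v, false)})) :=
          ResDeriv.res v (e1 ▸ hCf) (e2 ▸ hCt)
        refine ⟨_, hres, ?_⟩
        rintro l (⟨hl, hne⟩ | ⟨hl, hne⟩)
        · have hv : l.1 ≠ v := fun hh => hne (by simpa using keyF l hl hh)
          refine ⟨?_, ?_⟩
          · intro hmem
            rcases List.mem_cons.mp hmem with hh | hh
            · exact hv hh
            · exact (hlf l hl).1 hh
          · have := (hlf l hl).2
            rwa [Function.update_of_ne hv] at this
        · have hv : l.1 ≠ v := fun hh => hne (by simpa using keyT l hl hh)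
          refine ⟨?_, ?_⟩
          · intro hmem
            rcases List.mem_cons.mp hmem with hh | hh
            · exact hv hh
            · exact (hlt l hl).1 hh
          · have := (hlt l hl).2
            rwa [Function.update_of_ne hv] at this
      · refine ⟨Cf, hCf, fun l hl => ?_⟩
        have hv : l.1 ≠ v := fun hh => hvf ((keyF l hl hh) ▸ hl)
        refine ⟨?_, ?_⟩
        · intro hmem
          rcases List.mem_cons.mp hmem with hh | hh
          · exact hv hh
          · exact (hlf l hl).1 hh
        · have := (hlf l hl).2
          rwa [Function.update_of_ne hv] at this
    · refine ⟨Ct, hCt, fun l hl => ?_⟩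
      have hv : l.1 ≠ v := fun hh => hvt ((keyT l hl hh) ▸ hl)
      refine ⟨?_, ?_⟩
      · intro hmem
        rcases List.mem_cons.mp hmem with hh | hh
        · exact hv hh
        · exact (hlt l hl).1 hh
      · have := (hlt l hl).2
        rwa [Function.update_of_ne hv] at this

lemma resDeriv_empty_of_unsat [Fintype V] {Φ : Set (Set (V × Bool))}
    (h : ¬ ∃ μ : V → Bool, SatCNF μ Φ) : ResDeriv Φ ∅ := by
  obtain ⟨C, hC, hl⟩ := tree_lemma (Φ := Φ) Finset.univ.toList (fun _ => false)
    (fun ν _ hs => h ⟨ν, hs⟩)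
  have : C = ∅ := Set.eq_empty_iff_forall_notMem.mpr fun l hl' =>
    (hl l hl').1 (by simp)
  rwa [this] at hC

lemma resDeriv_from_units {Φ : Set (Set (V × Bool))} {L : Set (V × Bool)}
    (hdist : ∀ l₁ ∈ L, ∀ l₂ ∈ L, l₁.1 = l₂.1 → l₁ = l₂)
    {C : Set (V × Bool)}
    (h : ResDeriv (Φ ∪ (fun l => ({l} : Set (V × Bool))) '' L) C) :
    (∃ C', C' ⊆ C ∪ {m | ∃ l ∈ L, m = (l.1, !l.2)} ∧ ResDeriv Φ C') ∨
      ∃ l ∈ L, l ∈ C := by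
  set N : Set (V × Bool) := {m | ∃ l ∈ L, m = (l.1, !l.2)} with hN
  induction h with
  | ax hC =>
    rcases hC with hC | ⟨l, hl, rfl⟩
    · exact Or.inl ⟨_, Set.subset_union_left, ResDeriv.ax hC⟩
    · exact Or.inr ⟨l, hl, rfl⟩
  | res v h1 h2 ih1 ih2 =>
    rename_i C₁ C₂
    rcases ih1 with ⟨D₁, hD₁, hd₁⟩ | ⟨l₁, hl₁, hmem₁⟩
    · rcases ih2 with ⟨D₂, hD₂, hd₂⟩ | ⟨l₂, hl₂, hmem₂⟩
      · by_cases hvt : (v, true) ∈ D₁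
        · by_cases hvf : (v, false) ∈ D₂
          · have e1 : D₁ = (D₁ \ {(v, true)}) ∪ {(v, true)} := by
              rw [Set.diff_union_of_subset (by simpa using hvt)]
            have e2 : D₂ = (D₂ \ {(v, false)}) ∪ {(v, false)} := by
              rw [Set.diff_union_of_subset (by simpa using hvf)]
            refine Or.inl ⟨(D₁ \ {(v, true)}) ∪ (D₂ \ {(v, false)}),
              ?_, ResDeriv.res v (e1 ▸ hd₁) (e2 ▸ hd₂)⟩
            rintro l (⟨hl, hne⟩ | ⟨hl, hne⟩)
            · rcases hD₁ hl with (hh | hh) | hh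
              · exact Or.inl (Or.inl hh)
              · exact absurd hh hne
              · exact Or.inr hh
            · rcases hD₂ hl with (hh | hh) | hh
              · exact Or.inl (Or.inr hh)
              · exact absurd hh hne
              · exact Or.inr hh
          · refine Or.inl ⟨D₂, ?_, hd₂⟩
            intro l hl
            rcases hD₂ hl with (hh | hh) | hh
            · exact Or.inl (Or.inr hh)
            · simp only [Set.mem_singleton_iff] at hh
              exact absurd (hh ▸ hl) hvf
            · exact Or.inr hh
        · refine Or.inl ⟨D₁, ?_, hd₁⟩
          intro l hl
          rcases hD₁ hl with (hh | hh) | hh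
          · exact Or.inl (Or.inl hh)
          · simp only [Set.mem_singleton_iff] at hh
            exact absurd (hh ▸ hl) hvt
          · exact Or.inr hh
      · rcases hmem₂ with hh | hh
        · exact Or.inr ⟨l₂, hl₂, Or.inr hh⟩
        · -- l₂ = (v, false), so (v, true) ∈ N
          simp only [Set.mem_singleton_iff] at hh
          subst hh
          refine Or.inl ⟨D₁, ?_, hd₁⟩
          intro l hl
          rcases hD₁ hl with (h1 | h1) | h1
          · exact Or.inl (Or.inl h1)
          · refine Or.inr ⟨(v, false), hl₂, ?_⟩
            simpa using h1
          · exact Or.inr h1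
    · rcases hmem₁ with hh | hh
      · exact Or.inr ⟨l₁, hl₁, Or.inl hh⟩
      · simp only [Set.mem_singleton_iff] at hh
        subst hh
        rcases ih2 with ⟨D₂, hD₂, hd₂⟩ | ⟨l₂, hl₂, hmem₂⟩
        · refine Or.inl ⟨D₂, ?_, hd₂⟩
          intro l hl
          rcases hD₂ hl with (h1 | h1) | h1
          · exact Or.inl (Or.inr h1)
          · refine Or.inr ⟨(v, true), hl₁, ?_⟩
            simpa using h1
          · exact Or.inr h1
        · rcases hmem₂ with hh | hh
          · exact Or.inr ⟨l₂, hl₂, Or.inr hh⟩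
          · simp only [Set.mem_singleton_iff] at hh
            subst hh
            exact absurd (hdist _ hl₁ _ hl₂ rfl) (by simp)

end ResLemmas


open Classical in
/-- The combined assignment used in the satisfiability transfer. -/
noncomputable def combAssign {U E : Type*} (D : E → Set U) (ρ : U → Bool)
    (T : Set (ArbVar U E D × Bool)) (μ' : ArbVar U E D → Bool) : CVar U E D → Bool :=
  Sum.elim ρ (Sum.elim (fun e => μ' ⟨e, restrict D ρ e⟩)
    (fun a => if a.2 = restrict D ρ a.1 then μ' a
      else if (a, true) ∈ T then true else false))

lemma combAssign_inl {U E : Type*} (D : E → Set U) (ρ : U → Bool)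
    (T : Set (ArbVar U E D × Bool)) (μ' : ArbVar U E D → Bool) (u : U) :
    combAssign D ρ T μ' (Sum.inl u) = ρ u := rfl

lemma combAssign_inrl {U E : Type*} (D : E → Set U) (ρ : U → Bool)
    (T : Set (ArbVar U E D × Bool)) (μ' : ArbVar U E D → Bool) (e : E) :
    combAssign D ρ T μ' (Sum.inr (Sum.inl e)) = μ' ⟨e, restrict D ρ e⟩ := rfl

open Classical in
lemma combAssign_inrr {U E : Type*} (D : E → Set U) (ρ : U → Bool)
    (T : Set (ArbVar U E D × Bool)) (μ' : ArbVar U E D → Bool) (a : ArbVar U E D) :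
    combAssign D ρ T μ' (Sum.inr (Sum.inr a)) =
      if a.2 = restrict D ρ a.1 then μ' a
      else if (a, true) ∈ T then true else false := rfl

/-- If the CNF `φ ∪ φ_A ∪ τ ∪ ρ` (with the partial arbiter assignment `τ` and the total
universal assignment `ρ` viewed as unit clauses) is unsatisfiable, then there is a subset
`S` of the literals of `τ^ρ` such that the clause of negations of the literals of `S`
(a subclause of `¬τ^ρ`, hence of `¬τ`) is derivable by resolution from the expansion
`φ^ρ`. -/
theorem subclause_derivable_from_expansion {U E : Type*} [Fintype U] [Fintype E]
    (D : E → Set U)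
    (φ : Set (Set ((U ⊕ E) × Bool))) (hfin : φ.Finite)
    (A : Set (ArbVar U E D))
    (T : Set (ArbVar U E D × Bool))
    (hTA : ∀ l ∈ T, l.1 ∈ A)
    (hTdist : ∀ l₁ ∈ T, ∀ l₂ ∈ T, l₁.1 = l₂.1 → l₁ = l₂)
    (ρ : U → Bool)
    (hunsat : ¬ ∃ μ : CVar U E D → Bool,
      SatCNF μ (embCNF D φ ∪ arbiterClauses D A ∪
        (fun l : ArbVar U E D × Bool =>
          ({(Sum.inr (Sum.inr l.1), l.2)} : Set (CVar U E D × Bool))) '' T ∪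
        Set.range (fun u : U => ({(Sum.inl u, ρ u)} : Set (CVar U E D × Bool))))) :
    ∃ S ⊆ {l ∈ T | l.1.2 = restrict D ρ l.1.1},
      ResDeriv (expansion D φ ρ)
        {m : ArbVar U E D × Bool | ∃ l ∈ S, m = (l.1, !l.2)} := by

  classical
  set L : Set (ArbVar U E D × Bool) := {l ∈ T | l.1.2 = restrict D ρ l.1.1} with hL
  set Ψ : Set (Set (ArbVar U E D × Bool)) := expansion D φ ρ with hΨ
  -- Step 1: Ψ ∪ unit clauses of L is unsatisfiable
  have hunsat' : ¬ ∃ μ' : ArbVar U E D → Bool,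
      SatCNF μ' (Ψ ∪ (fun l => ({l} : Set (ArbVar U E D × Bool))) '' L) := by
    rintro ⟨μ', hμ'⟩
    apply hunsat
    refine ⟨combAssign D ρ T μ', ?_⟩
    intro C hC
    rcases hC with ((hC | hC) | hC) | hC
    · -- clauses of φ
      obtain ⟨C₀, hC₀, rfl⟩ := hC
      by_cases hu : ∃ u b, (Sum.inl u, b) ∈ C₀ ∧ ρ u = b
      · obtain ⟨u, b, hmem, hub⟩ := hu
        exact ⟨(Sum.inl u, b), ⟨(Sum.inl u, b), hmem, rfl⟩, hub⟩
      · push_neg at hu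
        have hu' : ∀ (u : U) (b : Bool), (Sum.inl u, b) ∈ C₀ → ρ u = !b := by
          intro u b hb
          have h := hu u b hb
          revert h; cases b <;> cases hr : ρ u <;> simp
        have hexp : {p : ArbVar U E D × Bool |
            ∃ e : E, (Sum.inr e, p.2) ∈ C₀ ∧ p.1 = ⟨e, restrict D ρ e⟩} ∈ Ψ :=
          ⟨C₀, hC₀, hu', rfl⟩
        obtain ⟨p, ⟨e, he, hp1⟩, hval⟩ := hμ' _ (Or.inl hexp)
        refine ⟨(Sum.inr (Sum.inl e), p.2), ⟨(Sum.inr e, p.2), he, rfl⟩, ?_⟩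
        rw [hp1] at hval
        exact (combAssign_inrl D ρ T μ' e).trans hval
    · -- arbiter clauses
      have key : ∀ a : ArbVar U E D, SatClause (combAssign D ρ T μ')
            {l | ∃ u : ↥(D a.1), l = (Sum.inl u.1, ! a.2 u)} ∨
          a.2 = restrict D ρ a.1 := by
        intro a
        by_cases hsig : a.2 = restrict D ρ a.1
        · exact Or.inr hsig
        · left
          obtain ⟨u, hu⟩ := Function.ne_iff.mp hsig
          have hu' : ρ u.1 = ! a.2 u := by
            simp only [restrict] at hu
            cases hau : a.2 u <;> simp [hau] at hu ⊢ <;> simp [hu]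
          exact ⟨(Sum.inl u.1, ! a.2 u), ⟨u, rfl⟩,
            (combAssign_inl D ρ T μ' u.1).trans hu'⟩
      rcases hC with ⟨a, _, rfl⟩ | ⟨a, _, rfl⟩
      · rcases key a with hs | hsig
        · obtain ⟨l, hl, hv⟩ := hs
          exact ⟨l, Or.inr hl, hv⟩
        · obtain ⟨e, σ⟩ := a
          have : σ = restrict D ρ e := hsig
          subst this
          cases hb : μ' ⟨e, restrict D ρ e⟩
          · exact ⟨(Sum.inr (Sum.inl e), false), Or.inl (by simp [arbClausePos]), by simpa⟩
          · refine ⟨(Sum.inr (Sum.inr ⟨e, restrict D ρ e⟩), true),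
              Or.inl (by simp [arbClausePos]), ?_⟩
            rw [combAssign_inrr, if_pos rfl]
            exact hb
      · rcases key a with hs | hsig
        · obtain ⟨l, hl, hv⟩ := hs
          exact ⟨l, Or.inr hl, hv⟩
        · obtain ⟨e, σ⟩ := a
          have : σ = restrict D ρ e := hsig
          subst this
          cases hb : μ' ⟨e, restrict D ρ e⟩
          · refine ⟨(Sum.inr (Sum.inr ⟨e, restrict D ρ e⟩), false),
              Or.inl (by simp [arbClauseNeg]), ?_⟩
            rw [combAssign_inrr, if_pos rfl]
            exact hb
          · exact ⟨(Sum.inr (Sum.inl e), true), Or.inl (by simp [arbClauseNeg]), by simpa⟩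
    · -- unit clauses from T
      obtain ⟨⟨a, b⟩, hT, rfl⟩ := hC
      refine ⟨(Sum.inr (Sum.inr a), b), rfl, ?_⟩
      by_cases hsig : a.2 = restrict D ρ a.1
      · have hLmem : ((a, b) : ArbVar U E D × Bool) ∈ L := ⟨hT, hsig⟩
        have := hμ' {(a, b)} (Or.inr ⟨(a, b), hLmem, rfl⟩)
        obtain ⟨l, hl, hv⟩ := this
        simp only [Set.mem_singleton_iff] at hl
        subst hl
        rw [combAssign_inrr, if_pos hsig]
        exact hv
      · rw [combAssign_inrr, if_neg hsig]
        cases b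
        · have hnt : ((a, true) : ArbVar U E D × Bool) ∉ T := fun ht => by
            have := hTdist _ ht _ hT rfl
            simp at this
          rw [if_neg hnt]
        · rw [if_pos hT]
    · -- unit clauses from ρ
      obtain ⟨u, rfl⟩ := hC
      exact ⟨(Sum.inl u, ρ u), rfl, rfl⟩
  -- Step 2: resolution
  haveI : ∀ e : E, Fintype ↥(D e) := fun e => (Set.toFinite (D e)).fintype
  have hempty : ResDeriv (Ψ ∪ (fun l => ({l} : Set (ArbVar U E D × Bool))) '' L) ∅ :=
    resDeriv_empty_of_unsat hunsat'
  have hLdist : ∀ l₁ ∈ L, ∀ l₂ ∈ L, l₁.1 = l₂.1 → l₁ = l₂ :=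
    fun l₁ h₁ l₂ h₂ => hTdist l₁ h₁.1 l₂ h₂.1
  rcases resDeriv_from_units hLdist hempty with ⟨C', hC'sub, hC'⟩ | ⟨l, _, hl⟩
  · have hC'N : C' ⊆ {m | ∃ l ∈ L, m = (l.1, !l.2)} := by
      intro m hm
      rcases hC'sub hm with h | h
      · exact absurd h (Set.notMem_empty m)
      · exact h
    refine ⟨{l ∈ L | (l.1, !l.2) ∈ C'}, fun l hl => hl.1, ?_⟩
    have heq : {m : ArbVar U E D × Bool |
        ∃ l ∈ {l ∈ L | (l.1, !l.2) ∈ C'}, m = (l.1, !l.2)} = C' := by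
      apply Set.eq_of_subset_of_subset
      · rintro m ⟨l, ⟨_, hmem⟩, rfl⟩
        exact hmem
      · intro m hm
        obtain ⟨l, hlL, rfl⟩ := hC'N hm
        exact ⟨l, ⟨hlL, hm⟩, rfl⟩
    rwa [heq]
  · exact absurd hl (Set.notMem_empty l)
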